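/- If y > 1 is a real algebraic number all of whose Galois conjugates other than y have absolute value at most 1, then x = y + 1/y satisfies x > 2 and every Galois conjugate of x is of the form z + 1/z for some conjugate z of y. -/

import Mathlib

open Polynomial

theorem conjugates_of_trace (y : ℝ) (hy : 1 < y) (halg : IsAlgebraic ℚ y)
    (hconj : ∀ z : ℂ, aeval z (minpoly ℚ y) = 0 → z ≠ (y : ℂ) → ‖z‖ ≤ 1) :
    2 < y + 1 / y ∧
      ∀ w : ℂ, aeval w (minpoly ℚ (y + 1 / y)) = 0 →
        ∃ z : ℂ, aeval z (minpoly ℚ y) = 0 ∧ w = z + 1 / z := by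
  have hy0 : (0:ℝ) < y := lt_trans one_pos hy
  constructor
  · have h1 : y * (1 / y) = 1 := by field_simp
    nlinarith [sq_nonneg (y - 1)]
  intro w hw
  set x := y + 1 / y with hx
  have hyint : IsIntegral ℚ y := halg.isIntegral
  have hyK : y ∈ IntermediateField.adjoin ℚ ({y} : Set ℝ) :=
    IntermediateField.mem_adjoin_simple_self ℚ y
  have hxK : x ∈ IntermediateField.adjoin ℚ ({y} : Set ℝ) := by
    have h1 : (1:ℝ)/y ∈ IntermediateField.adjoin ℚ ({y} : Set ℝ) := by
      rw [one_div]; exact (IntermediateField.adjoin ℚ ({y} : Set ℝ)).inv_mem hyK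
    exact (IntermediateField.adjoin ℚ ({y} : Set ℝ)).add_mem hyK h1
  have hK : ∀ s ∈ ({y} : Set ℝ), IsIntegral ℚ s ∧
      ((minpoly ℚ s).map (algebraMap ℚ ℂ)).Splits := by
    rintro s rfl
    exact ⟨hyint, IsAlgClosed.splits _⟩
  obtain ⟨φ, hφ⟩ :=
    IntermediateField.exists_algHom_adjoin_of_splits_of_aeval hK hxK hw
  set yK : IntermediateField.adjoin ℚ ({y} : Set ℝ) := ⟨y, hyK⟩ with hyKdef
  refine ⟨φ yK, ?_, ?_⟩
  · have h0 : aeval yK (minpoly ℚ y) = 0 := by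
      apply Subtype.ext
      have h := IntermediateField.aeval_coe (S := IntermediateField.adjoin ℚ ({y} : Set ℝ))
        yK (minpoly ℚ y)
      have h2 : ((yK : ℝ)) = y := rfl
      refine h.symm.trans ?_
      rw [h2, minpoly.aeval ℚ y]
      simp
    rw [Polynomial.aeval_algHom_apply φ yK (minpoly ℚ y), h0, map_zero]
  · have hxsum : (⟨x, hxK⟩ : IntermediateField.adjoin ℚ ({y} : Set ℝ)) = yK + yK⁻¹ := by
      apply Subtype.ext
      show x = y + (↑(yK⁻¹) : ℝ)
      have : (↑(yK⁻¹) : ℝ) = y⁻¹ := rfl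
      rw [this, hx, one_div]
    rw [← hφ, hxsum, map_add, map_inv₀, one_div]
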